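/- Let P₁,…,P_{k+1} : ℝ → ℝⁿ be C¹ maps. Then for every t, the derivative d/dt [det(⟨P_a(t) − P₁(t), P_b(t) − P₁(t)⟩)_{2≤a,b≤k+1}] equals Σ_{1≤i<j≤k+1} det(⟨P_a(t) − P_i(t), P_b(t) − P_j(t)⟩)_{a,b} · d/dt[‖P_i(t) − P_j(t)‖²], where in each summand the indices a and b both run, in increasing order, over {1,…,k+1} ∖ {i,j}. -/

import Mathlib

open Matrix

noncomputable section GramAux

variable {E : Type*} [NormedAddCommGroup E] [InnerProductSpace ℝ E]

local notation "⟪" x ", " y "⟫" => @inner ℝ _ _ x y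

/-- Bordered Gram matrix: ones border plus raw inner products. -/
def bmat {m : ℕ} (v : Fin m → E) : Matrix (Option (Fin m)) (Option (Fin m)) ℝ :=
  Matrix.of fun r c =>
    match r, c with
    | none, none => 0
    | none, some _ => 1
    | some _, none => 1
    | some a, some b => ⟪v a, v b⟫

@[simp] lemma bmat_none_none {m : ℕ} (v : Fin m → E) : bmat v none none = 0 := rfl
@[simp] lemma bmat_none_some {m : ℕ} (v : Fin m → E) (b : Fin m) : bmat v none (some b) = 1 := rfl
@[simp] lemma bmat_some_none {m : ℕ} (v : Fin m → E) (a : Fin m) : bmat v (some a) none = 1 := rfl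
@[simp] lemma bmat_some_some {m : ℕ} (v : Fin m → E) (a b : Fin m) :
    bmat v (some a) (some b) = ⟪v a, v b⟫ := rfl

lemma det_bmat {k : ℕ} (v : Fin (k + 1) → E) :
    (bmat v).det
      = - (Matrix.of fun a b : Fin k => (⟪v a.succ - v 0, v b.succ - v 0⟫ : ℝ)).det := by
  classical
  let e : (Fin 2 ⊕ Fin k) ≃ Option (Fin (k + 1)) :=
    { toFun := Sum.elim ![none, some 0] (fun a => some a.succ)
      invFun := fun r => Option.rec (Sum.inl 0)
        (fun x => Fin.cases (Sum.inl 1) (fun a => Sum.inr a) x) r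
      left_inv := by
        rintro (z | a)
        · fin_cases z <;> simp
        · simp
      right_inv := by
        rintro (_ | x)
        · simp
        · induction x using Fin.cases <;> simp }
  have h0 : (bmat v).det = ((bmat v).submatrix e e).det :=
    (Matrix.det_submatrix_equiv_self e _).symm
  set g : ℝ := ⟪v 0, v 0⟫ with hg
  let A : Matrix (Fin 2) (Fin 2) ℝ := !![0, 1; 1, g]
  let Bb : Matrix (Fin 2) (Fin k) ℝ := Matrix.of fun i b => ![(1 : ℝ), ⟪v 0, v b.succ⟫] i
  let Cb : Matrix (Fin k) (Fin 2) ℝ := Matrix.of fun a i => ![(1 : ℝ), ⟪v a.succ, v 0⟫] i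
  let Db : Matrix (Fin k) (Fin k) ℝ := Matrix.of fun a b => ⟪v a.succ, v b.succ⟫
  have hblocks : (bmat v).submatrix e e = Matrix.fromBlocks A Bb Cb Db := by
    ext r c
    rcases r with i | a <;> rcases c with j | b
    · fin_cases i <;> fin_cases j <;> simp [e, A, hg]
    · fin_cases i <;> simp [e, Bb]
    · fin_cases j <;> simp [e, Cb]
    · simp [e, Db]
  have hmul : A * !![-g, 1; 1, 0] = 1 := by
    ext i j
    fin_cases i <;> fin_cases j <;>
      simp [A, Matrix.mul_apply, Fin.sum_univ_two, Matrix.one_apply]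
  have hmul' : !![-g, 1; 1, 0] * A = 1 := by
    ext i j
    fin_cases i <;> fin_cases j <;>
      simp [A, Matrix.mul_apply, Fin.sum_univ_two, Matrix.one_apply]
  haveI hAinv : Invertible A := ⟨!![-g, 1; 1, 0], hmul', hmul⟩
  have hinvOf : (⅟A : Matrix (Fin 2) (Fin 2) ℝ) = !![-g, 1; 1, 0] := invOf_eq_right_inv hmul
  rw [h0, hblocks, Matrix.det_fromBlocks₁₁]
  have hdetA : A.det = -1 := by simp [A, Matrix.det_fin_two]
  have hschur : Db - Cb * ⅟A * Bb
      = Matrix.of fun a b : Fin k => (⟪v a.succ - v 0, v b.succ - v 0⟫ : ℝ) := by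
    ext a b
    simp [Db, Cb, Bb, hinvOf, Matrix.mul_apply, Fin.sum_univ_two, Matrix.sub_apply,
      inner_sub_left, inner_sub_right, real_inner_comm (v 0) (v a.succ), hg]
    ring
  rw [hschur, hdetA]
  ring

lemma adjugate_bmat {k : ℕ} (v : Fin (k + 1) → E) {i j : Fin (k + 1)} (hij : i ≠ j) :
    (bmat v).adjugate (some i) (some j)
      = (Matrix.of fun a b : {x : Fin (k + 1) // x ≠ i ∧ x ≠ j} =>
          (⟪v a.1 - v i, v b.1 - v j⟫ : ℝ)).det := by
  classical
  rw [Matrix.adjugate_apply]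
  set U : Matrix (Option (Fin (k + 1))) (Option (Fin (k + 1))) ℝ :=
    (bmat v).updateRow (some j) (Pi.single (some i) 1) with hU
  let S := {x : Fin (k + 1) // x ≠ i ∧ x ≠ j}
  let e : (Fin 3 ⊕ S) ≃ Option (Fin (k + 1)) :=
    { toFun := Sum.elim ![none, some i, some j] (fun s => some s.1)
      invFun := fun r => match r with
        | none => Sum.inl 0
        | some x =>
          if h1 : x = i then Sum.inl 1 else if h2 : x = j then Sum.inl 2
          else Sum.inr ⟨x, h1, h2⟩
      left_inv := by
        rintro (z | s)
        · fin_cases z <;> simp [hij.symm]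
        · simp [s.2.1, s.2.2]
      right_inv := by
        rintro (_ | x)
        · simp
        · by_cases h1 : x = i
          · subst h1; simp
          · by_cases h2 : x = j
            · subst h2; simp [h1]
            · simp [h1, h2] }
  have h0 : U.det = (U.submatrix e e).det := (Matrix.det_submatrix_equiv_self e _).symm
  set g : ℝ := ⟪v i, v i⟫ with hg
  set hh : ℝ := ⟪v i, v j⟫ with hhh
  let A : Matrix (Fin 3) (Fin 3) ℝ := !![0, 1, 1; 1, g, hh; 0, 1, 0]
  let Ai : Matrix (Fin 3) (Fin 3) ℝ := !![-hh, 1, hh - g; 0, 0, 1; 1, 0, -1]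
  let Bb : Matrix (Fin 3) S ℝ := Matrix.of fun r b => ![(1 : ℝ), ⟪v i, v b.1⟫, 0] r
  let Cb : Matrix S (Fin 3) ℝ := Matrix.of fun a r => ![(1 : ℝ), ⟪v a.1, v i⟫, ⟪v a.1, v j⟫] r
  let Db : Matrix S S ℝ := Matrix.of fun a b => ⟪v a.1, v b.1⟫
  have hblocks : U.submatrix e e = Matrix.fromBlocks A Bb Cb Db := by
    ext r c
    rcases r with z | a <;> rcases c with w | b
    · fin_cases z <;> fin_cases w <;>
        simp [e, A, U, hij, hij.symm, Matrix.updateRow_apply, Pi.single_apply, hg, hhh]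
    · fin_cases z <;>
        simp [e, Bb, U, hij, hij.symm, Matrix.updateRow_apply, Pi.single_apply,
          (b.2.1).symm, (b.2.2).symm]
    · fin_cases w <;>
        simp [e, Cb, U, hij, hij.symm, Matrix.updateRow_apply, Pi.single_apply,
          a.2.1, a.2.2]
    · simp [e, Db, U, hij, hij.symm, Matrix.updateRow_apply, Pi.single_apply, a.2.1, a.2.2]
  have hmul : A * Ai = 1 := by
    ext z w
    fin_cases z <;> fin_cases w <;>
      norm_num [A, Ai, Matrix.mul_apply, Fin.sum_univ_three, Matrix.one_apply,
        Fin.ext_iff, Matrix.vecHead, Matrix.vecTail, Matrix.cons_val_two]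
  have hmul' : Ai * A = 1 := by
    ext z w
    fin_cases z <;> fin_cases w <;>
      norm_num [A, Ai, Matrix.mul_apply, Fin.sum_univ_three, Matrix.one_apply,
        Fin.ext_iff, Matrix.vecHead, Matrix.vecTail, Matrix.cons_val_two]
  haveI : Invertible A := ⟨Ai, hmul', hmul⟩
  have hinvOf : (⅟A : Matrix (Fin 3) (Fin 3) ℝ) = Ai := invOf_eq_right_inv hmul
  rw [h0, hblocks, Matrix.det_fromBlocks₁₁]
  have hdetA : A.det = 1 := by simp [A, Matrix.det_fin_three]
  have hschur : Db - Cb * ⅟A * Bb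
      = Matrix.of fun a b : S => (⟪v a.1 - v i, v b.1 - v j⟫ : ℝ) := by
    ext a b
    simp [Db, Cb, Bb, hinvOf, Ai, Matrix.mul_apply, Fin.sum_univ_three, Matrix.sub_apply,
      inner_sub_left, inner_sub_right, real_inner_comm (v i) (v a.1)]
    ring
  rw [hschur, hdetA, one_mul]

end GramAux

section DetDeriv

variable {ι : Type*} [Fintype ι] [DecidableEq ι]

/-- The determinant as a continuous multilinear map in the rows. -/
noncomputable def detCML (ι : Type*) [Fintype ι] [DecidableEq ι] :
    ContinuousMultilinearMap ℝ (fun _ : ι => ι → ℝ) ℝ :=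
  { toMultilinearMap := (Matrix.detRowAlternating (R := ℝ) (n := ι)).toMultilinearMap
    cont := by
      have h : Continuous fun m : Matrix ι ι ℝ => m.det := continuous_id.matrix_det
      exact h }

lemma hasDerivAt_det {B : ℝ → ι → ι → ℝ} {B' : ι → ι → ℝ} {t : ℝ}
    (h : ∀ r c, HasDerivAt (fun u => B u r c) (B' r c) t) :
    HasDerivAt (fun u => (Matrix.of (B u)).det)
      (∑ r : ι, ((Matrix.of (B t)).updateRow r (B' r)).det) t := by
  have hB : HasDerivAt B B' t := by
    rw [hasDerivAt_pi]
    intro r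
    rw [hasDerivAt_pi]
    exact fun c => h r c
  have hF := ((detCML ι).hasFDerivAt (x := B t)).comp_hasDerivAt t hB
  have hval : (detCML ι).linearDeriv (B t) B'
      = ∑ r : ι, ((Matrix.of (B t)).updateRow r (B' r)).det := by
    rw [ContinuousMultilinearMap.linearDeriv_apply]
    exact Finset.sum_congr rfl fun r _ => rfl
  rw [hval] at hF
  exact hF

lemma det_updateRow_eq_sum (M : Matrix ι ι ℝ) (r : ι) (v : ι → ℝ) :
    (M.updateRow r v).det = ∑ c : ι, v c * M.adjugate c r := by
  have h1 : (M.updateRow r v).det = Matrix.cramer Mᵀ v r := by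
    rw [Matrix.cramer_apply, Matrix.updateCol_transpose, Matrix.det_transpose]
  have hv : v = ∑ c : ι, v c • (Pi.single c (1 : ℝ) : ι → ℝ) := by
    funext x
    simp [Pi.single_apply]
  rw [h1]
  conv_lhs => rw [hv]
  rw [map_sum]
  simp only [_root_.map_smul, Finset.sum_apply, Pi.smul_apply, smul_eq_mul]
  refine Finset.sum_congr rfl fun c _ => ?_
  rw [Matrix.adjugate_def]
  rfl

end DetDeriv

/-- For `C¹` motions `P₁(t), …, P_{k+1}(t)` in `ℝⁿ`, the derivative of the Gram determinant
`det(⟨P_a(t) − P₁(t), P_b(t) − P₁(t)⟩)_{2 ≤ a,b ≤ k+1}` equals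
`Σ_{i<j} det(⟨P_a(t) − P_i(t), P_b(t) − P_j(t)⟩)_{a,b ∉ {i,j}} · d/dt ‖P_i(t) − P_j(t)‖²`. -/
theorem deriv_gram_det_motion {n k : ℕ} (P : Fin (k + 1) → ℝ → EuclideanSpace ℝ (Fin n))
    (hP : ∀ i, ContDiff ℝ 1 (P i)) (t : ℝ) :
    HasDerivAt
      (fun u : ℝ => Matrix.det (Matrix.of fun a b : Fin k =>
        (inner ℝ (P a.succ u - P 0 u) (P b.succ u - P 0 u) : ℝ)))
      (∑ i : Fin (k + 1), ∑ j : Fin (k + 1), if i < j then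
        Matrix.det (Matrix.of fun (a b : {x : Fin (k + 1) // x ≠ i ∧ x ≠ j}) =>
          (inner ℝ (P a.1 t - P i t) (P b.1 t - P j t) : ℝ)) *
          deriv (fun u : ℝ => ‖P i u - P j u‖ ^ 2) t
        else 0)
      t := by
  classical
  have hD : ∀ i, HasDerivAt (P i) (deriv (P i) t) t := fun i =>
    (((hP i).differentiable one_ne_zero) t).hasDerivAt
  set Q : Fin (k + 1) → EuclideanSpace ℝ (Fin n) := fun a => P a t with hQ
  set W : Fin (k + 1) → EuclideanSpace ℝ (Fin n) := fun a => deriv (P a) t with hW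
  set s : Fin (k + 1) → Fin (k + 1) → ℝ := fun a b => inner ℝ (Q a) (W b) with hs
  set A : Fin (k + 1) → Fin (k + 1) → ℝ :=
    fun a b => (bmat Q).adjugate (some a) (some b) with hA
  -- entrywise derivative of the bordered matrix
  set B' : Option (Fin (k + 1)) → Option (Fin (k + 1)) → ℝ := fun r c =>
    match r, c with
    | some a, some b => (inner ℝ (Q a) (W b) : ℝ) + (inner ℝ (W a) (Q b) : ℝ)
    | _, _ => 0 with hB'
  have hEntry : ∀ r c,
      HasDerivAt (fun u => bmat (fun a => P a u) r c) (B' r c) t := by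
    intro r c
    cases r with
    | none =>
      cases c with
      | none => simpa using hasDerivAt_const t (0 : ℝ)
      | some b => simpa using hasDerivAt_const t (1 : ℝ)
    | some a =>
      cases c with
      | none => simpa using hasDerivAt_const t (1 : ℝ)
      | some b => simpa using (hD a).inner ℝ (hD b)
  have hDer := hasDerivAt_det (B := fun u => fun r c => bmat (fun a => P a u) r c)
    (B' := B') hEntry
  -- symmetry of the adjugate
  have hsym : (bmat Q)ᵀ = bmat Q := by
    ext r c
    simp only [Matrix.transpose_apply]
    cases r <;> cases c <;>
      simp only [bmat_none_none, bmat_none_some, bmat_some_none, bmat_some_some] <;>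
      first | rfl | exact real_inner_comm _ _
  have hAsymm : ∀ a b, A a b = A b a := by
    intro a b
    show (bmat Q).adjugate (some a) (some b) = (bmat Q).adjugate (some b) (some a)
    have h1 : (bmat Q).adjugate (some a) (some b)
        = ((bmat Q).adjugate)ᵀ (some b) (some a) := rfl
    rw [h1, Matrix.adjugate_transpose, hsym]
  -- row sums of the adjugate (over point-columns) vanish
  have hrow : ∀ a, ∑ b, A a b = 0 := by
    intro a
    have h := congrFun (congrFun (Matrix.adjugate_mul (bmat Q)) (some a)) none
    rw [Matrix.mul_apply, Fintype.sum_option] at h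
    simpa [Matrix.one_apply] using h
  -- the derivative value, rewritten
  have hval : (∑ r : Option (Fin (k + 1)),
        ((Matrix.of (fun r c => bmat (fun a => P a t) r c)).updateRow r (B' r)).det)
      = ∑ a, ∑ b, (s a b + s b a) * A a b := by
    have hofQ : (Matrix.of (fun r c => bmat (fun a => P a t) r c)) = bmat Q := rfl
    rw [hofQ]
    have h1 : ∀ r, ((bmat Q).updateRow r (B' r)).det
        = ∑ c, B' r c * (bmat Q).adjugate c r := fun r => det_updateRow_eq_sum _ r _
    simp only [h1]
    rw [Fintype.sum_option]
    have h2 : (∑ c, B' none c * (bmat Q).adjugate c none) = 0 := by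
      apply Finset.sum_eq_zero
      intro c _
      cases c <;> simp [hB']
    rw [h2, zero_add]
    refine Finset.sum_congr rfl fun a _ => ?_
    rw [Fintype.sum_option]
    have h3 : B' (some a) none = 0 := rfl
    rw [h3, zero_mul, zero_add]
    refine Finset.sum_congr rfl fun b _ => ?_
    have h4 : B' (some a) (some b) = s a b + s b a := by
      show (inner ℝ (Q a) (W b) : ℝ) + (inner ℝ (W a) (Q b) : ℝ)
          = (inner ℝ (Q a) (W b) : ℝ) + (inner ℝ (Q b) (W a) : ℝ)
      exact congrArg (HAdd.hAdd _) (real_inner_comm (Q b) (W a))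
    rw [h4]
    congr 1
    exact hAsymm b a
  -- rewrite the goal function via the bordered determinant
  have hfun : (fun u : ℝ => Matrix.det (Matrix.of fun a b : Fin k =>
        (inner ℝ (P a.succ u - P 0 u) (P b.succ u - P 0 u) : ℝ)))
      = fun u : ℝ => -(Matrix.of (fun r c => bmat (fun a => P a u) r c)).det := by
    funext u
    have h := det_bmat (fun a => P a u)
    have hof : (Matrix.of (fun r c => bmat (fun a => P a u) r c)) = bmat (fun a => P a u) :=
      rfl
    rw [hof, h, neg_neg]
  rw [hfun]
  -- it remains to identify the derivative values
  have hgoal : (∑ i : Fin (k + 1), ∑ j : Fin (k + 1), if i < j then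
        Matrix.det (Matrix.of fun (a b : {x : Fin (k + 1) // x ≠ i ∧ x ≠ j}) =>
          (inner ℝ (P a.1 t - P i t) (P b.1 t - P j t) : ℝ)) *
          deriv (fun u : ℝ => ‖P i u - P j u‖ ^ 2) t
        else 0)
      = -∑ a, ∑ b, (s a b + s b a) * A a b := by
    -- derivative of squared distances
    have hderiv : ∀ i j : Fin (k + 1), deriv (fun u : ℝ => ‖P i u - P j u‖ ^ 2) t
        = 2 * (s i i + s j j - s i j - s j i) := by
      intro i j
      have h1 : HasDerivAt (fun u => P i u - P j u) (W i - W j) t := (hD i).sub (hD j)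
      have h2 := h1.inner ℝ h1
      have h3 : (fun u : ℝ => ‖P i u - P j u‖ ^ 2)
          = fun u : ℝ => (inner ℝ (P i u - P j u) (P i u - P j u) : ℝ) := by
        funext u
        rw [real_inner_self_eq_norm_sq]
      rw [h3, h2.deriv]
      have h5 : (inner ℝ (W i - W j) (P i t - P j t) : ℝ)
          = (inner ℝ (P i t - P j t) (W i - W j) : ℝ) := real_inner_comm _ _
      rw [h5]
      simp only [inner_sub_left, inner_sub_right, hs, hQ]
      ring
    -- each determinant is an adjugate entry
    set T : Fin (k + 1) → Fin (k + 1) → ℝ :=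
      fun i j => A i j * (s i i + s j j - s i j - s j i) with hT
    have hdetM : ∀ (i j : Fin (k + 1)) (hij : i ≠ j),
        (Matrix.det (Matrix.of fun (a b : {x : Fin (k + 1) // x ≠ i ∧ x ≠ j}) =>
          (inner ℝ (P a.1 t - P i t) (P b.1 t - P j t) : ℝ))) = A i j := by
      intro i j hij
      exact (adjugate_bmat (fun a => P a t) hij).symm
    have hTsymm : ∀ i j, T i j = T j i := by
      intro i j
      simp only [hT]
      rw [hAsymm i j]
      ring
    have hstep1 : (∑ i : Fin (k + 1), ∑ j : Fin (k + 1), if i < j then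
        Matrix.det (Matrix.of fun (a b : {x : Fin (k + 1) // x ≠ i ∧ x ≠ j}) =>
          (inner ℝ (P a.1 t - P i t) (P b.1 t - P j t) : ℝ)) *
          deriv (fun u : ℝ => ‖P i u - P j u‖ ^ 2) t
        else 0)
        = ∑ i, ∑ j, ((if i < j then T i j else 0) + (if i < j then T i j else 0)) := by
      refine Finset.sum_congr rfl fun i _ => Finset.sum_congr rfl fun j _ => ?_
      by_cases hij : i < j
      · simp only [if_pos hij]
        rw [hderiv i j, hdetM i j (ne_of_lt hij)]
        simp only [hT]
        ring
      · simp only [if_neg hij, add_zero]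
    have hswap : (∑ i, ∑ j, if i < j then T i j else 0)
        = ∑ i, ∑ j, if j < i then T i j else 0 := by
      rw [Finset.sum_comm]
      refine Finset.sum_congr rfl fun i _ => Finset.sum_congr rfl fun j _ => ?_
      by_cases h : j < i
      · simp only [if_pos h]
        exact hTsymm j i
      · simp only [if_neg h]
    have hstep2 : (∑ i, ∑ j, ((if i < j then T i j else 0) + (if i < j then T i j else 0)))
        = ∑ i, ∑ j, T i j := by
      simp only [Finset.sum_add_distrib]
      nth_rewrite 2 [hswap]
      rw [← Finset.sum_add_distrib]
      simp only [← Finset.sum_add_distrib]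
      refine Finset.sum_congr rfl fun i _ => Finset.sum_congr rfl fun j _ => ?_
      rcases lt_trichotomy i j with h | h | h
      · simp only [if_pos h, if_neg (asymm h), add_zero]
      · subst h
        simp only [if_neg (lt_irrefl i), add_zero, zero_add]
        simp only [hT]
        ring
      · simp only [if_neg (asymm h), if_pos h, zero_add]
    have hstep3 : (∑ i, ∑ j, T i j) = -∑ a, ∑ b, (s a b + s b a) * A a b := by
      have e1 : ∀ i j : Fin (k + 1), T i j
          = A i j * s i i + A i j * s j j - A i j * (s i j + s j i) := by
        intro i j
        simp only [hT]
        ring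
      simp only [e1, Finset.sum_sub_distrib, Finset.sum_add_distrib]
      have z1 : (∑ i, ∑ j, A i j * s i i) = 0 := by
        refine Finset.sum_eq_zero fun i _ => ?_
        rw [← Finset.sum_mul, hrow, zero_mul]
      have z2 : (∑ i : Fin (k + 1), ∑ j, A i j * s j j) = 0 := by
        rw [Finset.sum_comm]
        refine Finset.sum_eq_zero fun j _ => ?_
        rw [← Finset.sum_mul]
        have : (∑ i, A i j) = 0 := by
          rw [Finset.sum_congr rfl fun i _ => hAsymm i j]
          exact hrow j
        rw [this, zero_mul]
      rw [z1, z2]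
      have e2 : (∑ i, ∑ j, A i j * (s i j + s j i)) = ∑ a, ∑ b, (s a b + s b a) * A a b :=
        Finset.sum_congr rfl fun i _ => Finset.sum_congr rfl fun j _ => by ring
      rw [e2]
      ring
    rw [hstep1, hstep2, hstep3]
  rw [hgoal, ← hval]
  exact hDer.neg
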